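/- Let (ψ₁,θ₁) and (ψ₂,θ₂) be pairs of C² functions on the closure of Ω, each vanishing on ∂Ω, each solving −Δψᵢ − R_a·∂ₓθᵢ = f₁ and J(ψᵢ,θᵢ) = Δθᵢ + f₂ pointwise on Ω for some R_a > 0 and continuous f₁, f₂. Set ψ̄ = ψ₁ − ψ₂ and θ̄ = θ₁ − θ₂. Then ‖∇ψ̄‖₂² + ‖∇θ̄‖₂² − R_a·∫_Ω (∂ₓθ̄)·ψ̄ + ∫_Ω [J(ψ₁,θ₁) − J(ψ₂,θ₂)]·θ̄ = 0. -/

import Mathlib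

open MeasureTheory Real Set Filter
open Topology

noncomputable section

/-- The open unit square Ω = (0,1) × (0,1) in ℝ². -/
def Omg : Set (ℝ × ℝ) := Ioo (0:ℝ) 1 ×ˢ Ioo (0:ℝ) 1

/-- Partial derivative in the x-direction. -/
def px (f : ℝ × ℝ → ℝ) (p : ℝ × ℝ) : ℝ := fderiv ℝ f p (1, 0)

/-- Partial derivative in the y-direction. -/
def py (f : ℝ × ℝ → ℝ) (p : ℝ × ℝ) : ℝ := fderiv ℝ f p (0, 1)

/-- Laplacian. -/
def lap (f : ℝ × ℝ → ℝ) (p : ℝ × ℝ) : ℝ := px (px f) p + py (py f) p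

/-- Jacobian determinant J(ψ,θ) = ∂ₓψ·∂_yθ − ∂_yψ·∂ₓθ. -/
def Jac (ψ θ : ℝ × ℝ → ℝ) (p : ℝ × ℝ) : ℝ := px ψ p * py θ p - py ψ p * px θ p

/-- The L^q norm over Ω: ‖f‖_q = (∫_Ω |f|^q)^(1/q). -/
def Lnorm (f : ℝ × ℝ → ℝ) (q : ℝ) : ℝ := (∫ p in Omg, |f p| ^ q) ^ (1 / q)

/-- ‖∇f‖₂ = (∫_Ω (|∂ₓf|² + |∂_yf|²))^(1/2). -/
def gradNorm (f : ℝ × ℝ → ℝ) : ℝ :=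
  (∫ p in Omg, (|px f p| ^ 2 + |py f p| ^ 2)) ^ ((1:ℝ) / 2)

lemma Omg_open : IsOpen Omg := isOpen_Ioo.prod isOpen_Ioo

lemma closure_Omg : closure Omg = Icc (0:ℝ) 1 ×ˢ Icc (0:ℝ) 1 := by
  rw [Omg, closure_prod_eq, closure_Ioo (by norm_num : (0:ℝ) ≠ 1)]

lemma closure_Omg' : closure Omg = Icc ((0,0) : ℝ × ℝ) (1,1) := by
  rw [closure_Omg, Icc_prod_eq]

lemma Omg_compact : IsCompact (closure Omg) := by
  rw [closure_Omg]; exact isCompact_Icc.prod isCompact_Icc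

lemma Omg_uniqueDiff : UniqueDiffOn ℝ (closure Omg) := by
  rw [closure_Omg]
  exact (uniqueDiffOn_Icc one_pos).prod (uniqueDiffOn_Icc one_pos)

lemma Omg_closure_nhds {p : ℝ × ℝ} (hp : p ∈ Omg) : closure Omg ∈ 𝓝 p :=
  Filter.mem_of_superset (Omg_open.mem_nhds hp) subset_closure

lemma Omg_null_frontier : volume (frontier Omg) = 0 := by
  rw [Omg, frontier_prod_eq, frontier_Ioo one_pos, closure_Ioo (by norm_num : (0:ℝ) ≠ 1)]
  refine measure_union_null ?_ ?_ <;>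
    · rw [Measure.volume_eq_prod, Measure.prod_prod]
      simp [Real.volume_Icc, Set.Finite.measure_zero (Set.toFinite ({0,1} : Set ℝ)) volume]

lemma Omg_ae_eq : Omg =ᵐ[volume] closure Omg := by
  rw [Filter.eventuallyEq_set]
  have h : ∀ᵐ p ∂(volume : Measure (ℝ × ℝ)), p ∉ frontier Omg :=
    (ae_iff.2 (by simpa using Omg_null_frontier))
  filter_upwards [h] with p hp
  constructor
  · exact fun h => subset_closure h
  · intro hc
    by_contra hno
    exact hp ⟨hc, by rwa [← Omg_open.interior_eq] at hno⟩

section Basic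

/-- within-derivative (continuous up to the boundary) -/
def dv (u : ℝ × ℝ → ℝ) : ℝ × ℝ → (ℝ × ℝ) →L[ℝ] ℝ := fderivWithin ℝ u (closure Omg)

/-- second within-derivative -/
def dv2 (u : ℝ × ℝ → ℝ) : ℝ × ℝ → (ℝ × ℝ) →L[ℝ] (ℝ × ℝ) →L[ℝ] ℝ :=
  fderivWithin ℝ (dv u) (closure Omg)

variable {u : ℝ × ℝ → ℝ} {p : ℝ × ℝ}

lemma dv_contDiffOn (hu : ContDiffOn ℝ 2 u (closure Omg)) :
    ContDiffOn ℝ 1 (dv u) (closure Omg) :=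
  hu.fderivWithin Omg_uniqueDiff (by norm_num)

lemma dv_cont (hu : ContDiffOn ℝ 2 u (closure Omg)) :
    ContinuousOn (dv u) (closure Omg) := (dv_contDiffOn hu).continuousOn

lemma dv2_cont (hu : ContDiffOn ℝ 2 u (closure Omg)) :
    ContinuousOn (dv2 u) (closure Omg) :=
  (dv_contDiffOn hu).continuousOn_fderivWithin Omg_uniqueDiff (le_refl 1)

lemma dv_eq (hp : p ∈ Omg) : dv u p = fderiv ℝ u p :=
  fderivWithin_of_mem_nhds (Omg_closure_nhds hp)

lemma diff_u (hu : ContDiffOn ℝ 2 u (closure Omg)) (hp : p ∈ Omg) :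
    DifferentiableAt ℝ u p :=
  ((hu.differentiableOn (by norm_num)) p (subset_closure hp)).differentiableAt
    (Omg_closure_nhds hp)

lemma hasFDerivAt_u (hu : ContDiffOn ℝ 2 u (closure Omg)) (hp : p ∈ Omg) :
    HasFDerivAt u (dv u p) p := by
  rw [dv_eq hp]; exact (diff_u hu hp).hasFDerivAt

lemma diff_dv (hu : ContDiffOn ℝ 2 u (closure Omg)) (hp : p ∈ Omg) :
    DifferentiableAt ℝ (dv u) p :=
  (((dv_contDiffOn hu).differentiableOn one_ne_zero) p (subset_closure hp)).differentiableAt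
    (Omg_closure_nhds hp)

lemma hasFDerivAt_dv (hu : ContDiffOn ℝ 2 u (closure Omg)) (hp : p ∈ Omg) :
    HasFDerivAt (dv u) (dv2 u p) p := by
  have : dv2 u p = fderiv ℝ (dv u) p := fderivWithin_of_mem_nhds (Omg_closure_nhds hp)
  rw [this]; exact (diff_dv hu hp).hasFDerivAt

lemma px_eq (hp : p ∈ Omg) : px u p = dv u p (1, 0) := by
  rw [px, dv_eq hp]

lemma py_eq (hp : p ∈ Omg) : py u p = dv u p (0, 1) := by
  rw [py, dv_eq hp]

lemma dv_eventually (hp : p ∈ Omg) : dv u =ᶠ[𝓝 p] fderiv ℝ u :=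
  Filter.eventually_of_mem (Omg_open.mem_nhds hp) (fun _ hq => dv_eq hq)

lemma hasFDerivAt_px (hu : ContDiffOn ℝ 2 u (closure Omg)) (hp : p ∈ Omg) :
    HasFDerivAt (px u)
      ((ContinuousLinearMap.apply ℝ ℝ ((1:ℝ), (0:ℝ))).comp (dv2 u p)) p := by
  have h1 : HasFDerivAt (fun q => dv u q (1, 0))
      ((ContinuousLinearMap.apply ℝ ℝ ((1:ℝ), (0:ℝ))).comp (dv2 u p)) p :=
    (ContinuousLinearMap.apply ℝ ℝ ((1:ℝ), (0:ℝ))).hasFDerivAt.comp p (hasFDerivAt_dv hu hp)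
  refine h1.congr_of_eventuallyEq ?_
  filter_upwards [(dv_eventually hp : dv u =ᶠ[𝓝 p] fderiv ℝ u)] with q hq
  rw [px, ← hq]

lemma hasFDerivAt_py (hu : ContDiffOn ℝ 2 u (closure Omg)) (hp : p ∈ Omg) :
    HasFDerivAt (py u)
      ((ContinuousLinearMap.apply ℝ ℝ ((0:ℝ), (1:ℝ))).comp (dv2 u p)) p := by
  have h1 : HasFDerivAt (fun q => dv u q (0, 1))
      ((ContinuousLinearMap.apply ℝ ℝ ((0:ℝ), (1:ℝ))).comp (dv2 u p)) p :=
    (ContinuousLinearMap.apply ℝ ℝ ((0:ℝ), (1:ℝ))).hasFDerivAt.comp p (hasFDerivAt_dv hu hp)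
  refine h1.congr_of_eventuallyEq ?_
  filter_upwards [(dv_eventually hp : dv u =ᶠ[𝓝 p] fderiv ℝ u)] with q hq
  rw [py, ← hq]

lemma px_px_eq (hu : ContDiffOn ℝ 2 u (closure Omg)) (hp : p ∈ Omg) :
    px (px u) p = dv2 u p (1, 0) (1, 0) := by
  rw [px, (hasFDerivAt_px hu hp).fderiv]; rfl

lemma py_py_eq (hu : ContDiffOn ℝ 2 u (closure Omg)) (hp : p ∈ Omg) :
    py (py u) p = dv2 u p (0, 1) (0, 1) := by
  rw [py, (hasFDerivAt_py hu hp).fderiv]; rfl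

lemma lap_eq (hu : ContDiffOn ℝ 2 u (closure Omg)) (hp : p ∈ Omg) :
    lap u p = dv2 u p (1, 0) (1, 0) + dv2 u p (0, 1) (0, 1) := by
  rw [lap, px_px_eq hu hp, py_py_eq hu hp]

end Basic

section Linearity

variable {f g : ℝ × ℝ → ℝ} {p : ℝ × ℝ}

lemma px_sub (hf : ContDiffOn ℝ 2 f (closure Omg)) (hg : ContDiffOn ℝ 2 g (closure Omg))
    (hp : p ∈ Omg) : px (fun q => f q - g q) p = px f p - px g p := by
  rw [px, fderiv_fun_sub (diff_u hf hp) (diff_u hg hp)]; rfl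

lemma py_sub (hf : ContDiffOn ℝ 2 f (closure Omg)) (hg : ContDiffOn ℝ 2 g (closure Omg))
    (hp : p ∈ Omg) : py (fun q => f q - g q) p = py f p - py g p := by
  rw [py, fderiv_fun_sub (diff_u hf hp) (diff_u hg hp)]; rfl

lemma lap_sub (hf : ContDiffOn ℝ 2 f (closure Omg)) (hg : ContDiffOn ℝ 2 g (closure Omg))
    (hp : p ∈ Omg) : lap (fun q => f q - g q) p = lap f p - lap g p := by
  have hev : (fun q => px f q - px g q) =ᶠ[𝓝 p] px (fun q => f q - g q) :=
    Filter.eventually_of_mem (Omg_open.mem_nhds hp)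
      (fun q hq => (px_sub hf hg hq).symm)
  have hevy : (fun q => py f q - py g q) =ᶠ[𝓝 p] py (fun q => f q - g q) :=
    Filter.eventually_of_mem (Omg_open.mem_nhds hp)
      (fun q hq => (py_sub hf hg hq).symm)
  have hx : HasFDerivAt (px (fun q => f q - g q))
      ((ContinuousLinearMap.apply ℝ ℝ ((1:ℝ), (0:ℝ))).comp (dv2 f p)
        - (ContinuousLinearMap.apply ℝ ℝ ((1:ℝ), (0:ℝ))).comp (dv2 g p)) p :=
    (((hasFDerivAt_px hf hp).sub (hasFDerivAt_px hg hp)).congr_of_eventuallyEq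
      hev.symm).congr_of_eventuallyEq (Filter.EventuallyEq.refl _ _)
  have hy : HasFDerivAt (py (fun q => f q - g q))
      ((ContinuousLinearMap.apply ℝ ℝ ((0:ℝ), (1:ℝ))).comp (dv2 f p)
        - (ContinuousLinearMap.apply ℝ ℝ ((0:ℝ), (1:ℝ))).comp (dv2 g p)) p :=
    ((hasFDerivAt_py hf hp).sub (hasFDerivAt_py hg hp)).congr_of_eventuallyEq hevy.symm
  have h1 : px (px (fun q => f q - g q)) p
      = dv2 f p (1,0) (1,0) - dv2 g p (1,0) (1,0) := by
    rw [px, hx.fderiv]; rfl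
  have h2 : py (py (fun q => f q - g q)) p
      = dv2 f p (0,1) (0,1) - dv2 g p (0,1) (0,1) := by
    rw [py, hy.fderiv]; rfl
  rw [lap, h1, h2, lap_eq hf hp, lap_eq hg hp]
  ring

end Linearity

section Green

variable {u : ℝ × ℝ → ℝ}

lemma cont_rep_grad (hu : ContDiffOn ℝ 2 u (closure Omg)) :
    ContinuousOn (fun p => |dv u p (1, 0)| ^ 2 + |dv u p (0, 1)| ^ 2) (closure Omg) :=
  (((dv_cont hu).clm_apply continuousOn_const).abs.pow 2).add
    (((dv_cont hu).clm_apply continuousOn_const).abs.pow 2)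

lemma cont_rep_ulap (hu : ContDiffOn ℝ 2 u (closure Omg)) :
    ContinuousOn (fun p => u p * (dv2 u p (1, 0) (1, 0) + dv2 u p (0, 1) (0, 1)))
      (closure Omg) :=
  hu.continuousOn.mul
    ((((dv2_cont hu).clm_apply continuousOn_const).clm_apply continuousOn_const).add
      (((dv2_cont hu).clm_apply continuousOn_const).clm_apply continuousOn_const))

lemma int_grad (hu : ContDiffOn ℝ 2 u (closure Omg)) :
    IntegrableOn (fun p => |px u p| ^ 2 + |py u p| ^ 2) Omg volume := by
  refine (((cont_rep_grad hu).integrableOn_compact Omg_compact).mono_set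
    subset_closure).congr_fun ?_ Omg_open.measurableSet
  intro p hp
  simp only [px_eq hp, py_eq hp]

lemma int_ulap (hu : ContDiffOn ℝ 2 u (closure Omg)) :
    IntegrableOn (fun p => u p * lap u p) Omg volume := by
  refine (((cont_rep_ulap hu).integrableOn_compact Omg_compact).mono_set
    subset_closure).congr_fun ?_ Omg_open.measurableSet
  intro p hp
  simp only [lap_eq hu hp]

lemma boundary_mem_x {x t : ℝ} (hx : x ∈ Icc (0:ℝ) 1) (ht : t = 0 ∨ t = 1) :
    (x, t) ∈ frontier Omg := by
  rw [Omg_open.frontier_eq, closure_Omg]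
  constructor
  · exact ⟨hx, by rcases ht with h | h <;> simp [h]⟩
  · rw [Omg]
    rintro ⟨-, h2⟩
    rcases ht with h | h <;> simp [h] at h2

lemma boundary_mem_y {y t : ℝ} (hy : y ∈ Icc (0:ℝ) 1) (ht : t = 0 ∨ t = 1) :
    (t, y) ∈ frontier Omg := by
  rw [Omg_open.frontier_eq, closure_Omg]
  constructor
  · exact ⟨by rcases ht with h | h <;> simp [h], hy⟩
  · rw [Omg]
    rintro ⟨h1, -⟩
    rcases ht with h | h <;> simp [h] at h1

lemma green (hu : ContDiffOn ℝ 2 u (closure Omg)) (hub : ∀ p ∈ frontier Omg, u p = 0) :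
    ∫ p in Omg, (|px u p| ^ 2 + |py u p| ^ 2)
      = - ∫ p in Omg, u p * lap u p := by
  set A1 := ContinuousLinearMap.apply ℝ ℝ ((1:ℝ), (0:ℝ)) with hA1
  set A2 := ContinuousLinearMap.apply ℝ ℝ ((0:ℝ), (1:ℝ)) with hA2
  set F : ℝ × ℝ → ℝ := fun p => u p * dv u p (1, 0) with hF
  set G : ℝ × ℝ → ℝ := fun p => u p * dv u p (0, 1) with hG
  set F' : ℝ × ℝ → (ℝ × ℝ) →L[ℝ] ℝ :=
    fun p => u p • (A1.comp (dv2 u p)) + (dv u p (1, 0)) • dv u p with hF'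
  set G' : ℝ × ℝ → (ℝ × ℝ) →L[ℝ] ℝ :=
    fun p => u p • (A2.comp (dv2 u p)) + (dv u p (0, 1)) • dv u p with hG'
  -- the divergence as a globally defined function
  have hdiv : ∀ x, F' x (1, 0) + G' x (0, 1)
      = (u x * (dv2 u x (1, 0) (1, 0) + dv2 u x (0, 1) (0, 1))
          + (|dv u x (1, 0)| ^ 2 + |dv u x (0, 1)| ^ 2)) := by
    intro x
    simp only [hF', hG', hA1, hA2, ContinuousLinearMap.add_apply,
      ContinuousLinearMap.coe_smul', Pi.smul_apply, ContinuousLinearMap.coe_comp',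
      Function.comp_apply, ContinuousLinearMap.apply_apply, smul_eq_mul, sq_abs]
    ring
  have hle : ((0, 0) : ℝ × ℝ) ≤ (1, 1) := by
    constructor <;> norm_num
  have Hcf : ContinuousOn F (Icc ((0,0) : ℝ × ℝ) (1,1)) := by
    rw [← closure_Omg']
    exact hu.continuousOn.mul ((dv_cont hu).clm_apply continuousOn_const)
  have Hcg : ContinuousOn G (Icc ((0,0) : ℝ × ℝ) (1,1)) := by
    rw [← closure_Omg']
    exact hu.continuousOn.mul ((dv_cont hu).clm_apply continuousOn_const)
  have hOmg_eq : Ioo ((0,0) : ℝ × ℝ).1 ((1,1) : ℝ × ℝ).1 ×ˢ Ioo ((0,0) : ℝ × ℝ).2 ((1,1) : ℝ × ℝ).2 = Omg := rfl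
  have Hdf : ∀ x ∈ Ioo ((0,0) : ℝ × ℝ).1 ((1,1) : ℝ × ℝ).1 ×ˢ
      Ioo ((0,0) : ℝ × ℝ).2 ((1,1) : ℝ × ℝ).2 \ (∅ : Set (ℝ × ℝ)),
      HasFDerivAt F (F' x) x := by
    intro x hx
    rw [diff_empty, hOmg_eq] at hx
    have h1 : HasFDerivAt (fun q => dv u q (1, 0)) (A1.comp (dv2 u x)) x :=
      A1.hasFDerivAt.comp x (hasFDerivAt_dv hu hx)
    exact (hasFDerivAt_u hu hx).mul h1
  have Hdg : ∀ x ∈ Ioo ((0,0) : ℝ × ℝ).1 ((1,1) : ℝ × ℝ).1 ×ˢ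
      Ioo ((0,0) : ℝ × ℝ).2 ((1,1) : ℝ × ℝ).2 \ (∅ : Set (ℝ × ℝ)),
      HasFDerivAt G (G' x) x := by
    intro x hx
    rw [diff_empty, hOmg_eq] at hx
    have h1 : HasFDerivAt (fun q => dv u q (0, 1)) (A2.comp (dv2 u x)) x :=
      A2.hasFDerivAt.comp x (hasFDerivAt_dv hu hx)
    exact (hasFDerivAt_u hu hx).mul h1
  have Hi : IntegrableOn (fun x => F' x (1, 0) + G' x (0, 1))
      (Icc ((0,0) : ℝ × ℝ) (1,1)) volume := by
    rw [← closure_Omg']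
    have : ContinuousOn (fun x => u x * (dv2 u x (1, 0) (1, 0) + dv2 u x (0, 1) (0, 1))
        + (|dv u x (1, 0)| ^ 2 + |dv u x (0, 1)| ^ 2)) (closure Omg) :=
      (cont_rep_ulap hu).add (cont_rep_grad hu)
    refine (this.integrableOn_compact Omg_compact).congr_fun ?_ Omg_compact.measurableSet
    intro x _
    exact (hdiv x).symm
  have key := integral_divergence_prod_Icc_of_hasFDerivAt_off_countable_of_le
    F G F' G' ((0,0) : ℝ × ℝ) (1,1) hle ∅ countable_empty Hcf Hcg Hdf Hdg Hi
  -- boundary terms vanish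
  have hGb1 : (∫ x in ((0,0):ℝ×ℝ).1..((1,1):ℝ×ℝ).1, G (x, ((1,1):ℝ×ℝ).2)) = 0 := by
    rw [show (∫ x in ((0,0):ℝ×ℝ).1..((1,1):ℝ×ℝ).1, G (x, ((1,1):ℝ×ℝ).2))
        = ∫ x in (0:ℝ)..1, G (x, 1) from rfl]
    rw [intervalIntegral.integral_congr (g := fun _ => (0:ℝ)) ?_, intervalIntegral.integral_zero]
    intro x hx
    rw [uIcc_of_le zero_le_one] at hx
    simp [hG, hub _ (boundary_mem_x hx (Or.inr rfl))]
  have hGb0 : (∫ x in ((0,0):ℝ×ℝ).1..((1,1):ℝ×ℝ).1, G (x, ((0,0):ℝ×ℝ).2)) = 0 := by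
    rw [show (∫ x in ((0,0):ℝ×ℝ).1..((1,1):ℝ×ℝ).1, G (x, ((0,0):ℝ×ℝ).2))
        = ∫ x in (0:ℝ)..1, G (x, 0) from rfl]
    rw [intervalIntegral.integral_congr (g := fun _ => (0:ℝ)) ?_, intervalIntegral.integral_zero]
    intro x hx
    rw [uIcc_of_le zero_le_one] at hx
    simp [hG, hub _ (boundary_mem_x hx (Or.inl rfl))]
  have hFb1 : (∫ y in ((0,0):ℝ×ℝ).2..((1,1):ℝ×ℝ).2, F (((1,1):ℝ×ℝ).1, y)) = 0 := by
    rw [show (∫ y in ((0,0):ℝ×ℝ).2..((1,1):ℝ×ℝ).2, F (((1,1):ℝ×ℝ).1, y))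
        = ∫ y in (0:ℝ)..1, F (1, y) from rfl]
    rw [intervalIntegral.integral_congr (g := fun _ => (0:ℝ)) ?_, intervalIntegral.integral_zero]
    intro y hy
    rw [uIcc_of_le zero_le_one] at hy
    simp [hF, hub _ (boundary_mem_y hy (Or.inr rfl))]
  have hFb0 : (∫ y in ((0,0):ℝ×ℝ).2..((1,1):ℝ×ℝ).2, F (((0,0):ℝ×ℝ).1, y)) = 0 := by
    rw [show (∫ y in ((0,0):ℝ×ℝ).2..((1,1):ℝ×ℝ).2, F (((0,0):ℝ×ℝ).1, y))
        = ∫ y in (0:ℝ)..1, F (0, y) from rfl]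
    rw [intervalIntegral.integral_congr (g := fun _ => (0:ℝ)) ?_, intervalIntegral.integral_zero]
    intro y hy
    rw [uIcc_of_le zero_le_one] at hy
    simp [hF, hub _ (boundary_mem_y hy (Or.inl rfl))]
  rw [hGb1, hGb0, hFb1, hFb0] at key
  simp only [sub_zero, add_zero, sub_self, zero_add] at key
  -- transfer to Omg
  have key2 : (∫ x in Omg, (F' x (1, 0) + G' x (0, 1))) = 0 := by
    rw [setIntegral_congr_set (closure_Omg' ▸ Omg_ae_eq : Omg =ᵐ[volume] Icc ((0,0):ℝ×ℝ) (1,1))]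
    exact key
  have key3 : (∫ p in Omg, (u p * lap u p + (|px u p| ^ 2 + |py u p| ^ 2))) = 0 := by
    rw [← key2]
    refine setIntegral_congr_fun Omg_open.measurableSet (fun p hp => ?_)
    rw [hdiv p, lap_eq hu hp, px_eq hp, py_eq hp]
  rw [integral_add ((int_ulap hu).congr_fun (fun p hp => rfl) Omg_open.measurableSet)
    (int_grad hu)] at key3
  linarith [key3]

end Green


lemma gradNorm_sq (u : ℝ × ℝ → ℝ) :
    gradNorm u ^ 2 = ∫ p in Omg, (|px u p| ^ 2 + |py u p| ^ 2) := by
  have hnn : 0 ≤ ∫ p in Omg, (|px u p| ^ 2 + |py u p| ^ 2) :=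
    setIntegral_nonneg Omg_open.measurableSet (fun p _ => by positivity)
  rw [gradNorm, ← Real.rpow_natCast _ 2, ← Real.rpow_mul hnn]
  norm_num


/-- Energy identity (3) for the difference of two classical solutions. -/
theorem stmt_6 (Ra : ℝ) (hRa : 0 < Ra) (f₁ f₂ : ℝ × ℝ → ℝ)
    (hf₁ : ContinuousOn f₁ (closure Omg)) (hf₂ : ContinuousOn f₂ (closure Omg))
    (ψ₁ θ₁ ψ₂ θ₂ : ℝ × ℝ → ℝ)
    (hψ₁ : ContDiffOn ℝ 2 ψ₁ (closure Omg)) (hθ₁ : ContDiffOn ℝ 2 θ₁ (closure Omg))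
    (hψ₂ : ContDiffOn ℝ 2 ψ₂ (closure Omg)) (hθ₂ : ContDiffOn ℝ 2 θ₂ (closure Omg))
    (hψ₁b : ∀ p ∈ frontier Omg, ψ₁ p = 0) (hθ₁b : ∀ p ∈ frontier Omg, θ₁ p = 0)
    (hψ₂b : ∀ p ∈ frontier Omg, ψ₂ p = 0) (hθ₂b : ∀ p ∈ frontier Omg, θ₂ p = 0)
    (heq1₁ : ∀ p ∈ Omg, -(lap ψ₁ p) - Ra * px θ₁ p = f₁ p)
    (heq2₁ : ∀ p ∈ Omg, Jac ψ₁ θ₁ p = lap θ₁ p + f₂ p)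
    (heq1₂ : ∀ p ∈ Omg, -(lap ψ₂ p) - Ra * px θ₂ p = f₁ p)
    (heq2₂ : ∀ p ∈ Omg, Jac ψ₂ θ₂ p = lap θ₂ p + f₂ p) :
    gradNorm (fun p => ψ₁ p - ψ₂ p) ^ 2 + gradNorm (fun p => θ₁ p - θ₂ p) ^ 2
      - Ra * (∫ p in Omg, px (fun q => θ₁ q - θ₂ q) p * (ψ₁ p - ψ₂ p))
      + (∫ p in Omg, (Jac ψ₁ θ₁ p - Jac ψ₂ θ₂ p) * (θ₁ p - θ₂ p)) = 0 := by
  have huΔ : ContDiffOn ℝ 2 (fun p => ψ₁ p - ψ₂ p) (closure Omg) := hψ₁.sub hψ₂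
  have htΔ : ContDiffOn ℝ 2 (fun p => θ₁ p - θ₂ p) (closure Omg) := hθ₁.sub hθ₂
  have hub : ∀ p ∈ frontier Omg, (fun p => ψ₁ p - ψ₂ p) p = 0 := fun p hp => by
    simp [hψ₁b p hp, hψ₂b p hp]
  have htb : ∀ p ∈ frontier Omg, (fun p => θ₁ p - θ₂ p) p = 0 := fun p hp => by
    simp [hθ₁b p hp, hθ₂b p hp]
  have G1 := green huΔ hub
  have G2 := green htΔ htb
  have h1 : (∫ p in Omg, (fun p => ψ₁ p - ψ₂ p) p * lap (fun p => ψ₁ p - ψ₂ p) p)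
      = ∫ p in Omg, -(Ra * (px (fun q => θ₁ q - θ₂ q) p * (ψ₁ p - ψ₂ p))) := by
    refine setIntegral_congr_fun Omg_open.measurableSet (fun p hp => ?_)
    have hl := lap_sub hψ₁ hψ₂ hp
    have hpx := px_sub hθ₁ hθ₂ hp
    have e1 := heq1₁ p hp
    have e2 := heq1₂ p hp
    have hkey : lap ψ₁ p - lap ψ₂ p = -(Ra * (px θ₁ p - px θ₂ p)) := by linarith
    simp only [hl, hpx, hkey]
    ring
  have h2 : (∫ p in Omg, (fun p => θ₁ p - θ₂ p) p * lap (fun p => θ₁ p - θ₂ p) p)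
      = ∫ p in Omg, (Jac ψ₁ θ₁ p - Jac ψ₂ θ₂ p) * (θ₁ p - θ₂ p) := by
    refine setIntegral_congr_fun Omg_open.measurableSet (fun p hp => ?_)
    have hl := lap_sub hθ₁ hθ₂ hp
    have e1 := heq2₁ p hp
    have e2 := heq2₂ p hp
    have hkey : lap θ₁ p - lap θ₂ p = Jac ψ₁ θ₁ p - Jac ψ₂ θ₂ p := by linarith
    simp only [hl, hkey]
    ring
  rw [h1, integral_neg, MeasureTheory.integral_const_mul] at G1
  rw [h2] at G2
  rw [gradNorm_sq, gradNorm_sq, G1, G2]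
  ring
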